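/- Let F be a probability distribution function on [0,∞) and for n ≥ 1 define α_n = sup_{u ≥ 0} (1 - F^{*n}(u))/(1 - F(u)), where F^{*n} is the n-fold convolution of F (assume 1 - F(u) > 0 for all u). Suppose α_2 < ∞ and α_2 ≥ 2. Then for all n ≥ 1, α_{n+1} ≤ 1 + α_n(α_2 - 1), and consequently α_n ≤ α_2ⁿ for all n ≥ 1. -/

import Mathlib

open MeasureTheory Filter Set ENNReal

/-- `n`-fold convolution of a measure on `ℝ` (with `μ^{*0} = δ₀`). -/
noncomputable def convPow (μ : Measure ℝ) : ℕ → Measure ℝ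
  | 0 => Measure.dirac 0
  | n + 1 => Measure.conv (convPow μ n) μ

instance convPow_prob (μ : Measure ℝ) [IsProbabilityMeasure μ] (n : ℕ) :
    IsProbabilityMeasure (convPow μ n) := by
  induction n with
  | zero => rw [convPow]; infer_instance
  | succ n ih => rw [convPow]; infer_instance

lemma convPow_one (μ : Measure ℝ) [SFinite μ] : convPow μ 1 = μ := by
  rw [convPow, convPow]; simp

lemma conv_apply_Ioi (μ ν : Measure ℝ) [SFinite μ] [SFinite ν] (u : ℝ) :
    (μ.conv ν) (Set.Ioi u) = ∫⁻ x, ν (Set.Ioi (u - x)) ∂μ := by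
  rw [Measure.conv, Measure.map_apply (by fun_prop) measurableSet_Ioi,
    Measure.prod_apply ((show Measurable fun x : ℝ × ℝ => x.1 + x.2 by fun_prop) measurableSet_Ioi)]
  refine lintegral_congr fun x => ?_
  congr 1
  ext y
  simp [sub_lt_iff_lt_add']


/-- Kesten-type recursion: with `αₙ = sup_{u ≥ 0} (1 - F^{*n}(u))/(1 - F(u))`,
if `α₂ < ∞` and `α₂ ≥ 2` then `α_{n+1} ≤ 1 + αₙ(α₂ - 1)` and hence `αₙ ≤ α₂ⁿ`. -/
theorem kesten_recursion
    (F : Measure ℝ) [IsProbabilityMeasure F] (hsupp : F (Set.Iio 0) = 0)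
    (hpos : ∀ u : ℝ, 0 ≤ u → F (Set.Ioi u) ≠ 0)
    (α : ℕ → ℝ≥0∞)
    (hα : ∀ n, α n = ⨆ u : {u : ℝ // 0 ≤ u},
      convPow F n (Set.Ioi u.1) / F (Set.Ioi u.1))
    (hα2fin : α 2 < ⊤) (hα2ge : 2 ≤ α 2) :
    (∀ n : ℕ, 1 ≤ n → α (n + 1) ≤ 1 + α n * (α 2 - 1)) ∧
    (∀ n : ℕ, 1 ≤ n → α n ≤ (α 2) ^ n) := by
  have h1le2 : (1 : ℝ≥0∞) ≤ α 2 := le_trans one_le_two hα2ge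
  -- F (Ioi t) = 1 for t < 0
  have hF1 : ∀ t : ℝ, t < 0 → F (Set.Ioi t) = 1 := by
    intro t ht
    refine le_antisymm prob_le_one ?_
    have hcover : (Set.univ : Set ℝ) ⊆ Set.Iio 0 ∪ Set.Ioi t := by
      intro x _
      rcases lt_or_ge x 0 with h | h
      · exact Or.inl h
      · exact Or.inr (lt_of_lt_of_le ht h)
    calc (1 : ℝ≥0∞) = F Set.univ := (measure_univ).symm
      _ ≤ F (Set.Iio 0 ∪ Set.Ioi t) := measure_mono hcover
      _ ≤ F (Set.Iio 0) + F (Set.Ioi t) := measure_union_le _ _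
      _ = F (Set.Ioi t) := by rw [hsupp, zero_add]
  -- the basic bound from the definition of α
  have hαle : ∀ n : ℕ, ∀ v : ℝ, 0 ≤ v → convPow F n (Set.Ioi v) ≤ α n * F (Set.Ioi v) := by
    intro n v hv
    have h := le_iSup (fun u : {u : ℝ // 0 ≤ u} => convPow F n (Set.Ioi u.1) / F (Set.Ioi u.1))
      (⟨v, hv⟩ : {u : ℝ // 0 ≤ u})
    rw [← hα n] at h
    exact (ENNReal.div_le_iff (hpos v hv) (measure_ne_top F _)).mp h
  -- convолution formula specialized
  have hconvPow : ∀ n : ℕ, ∀ u : ℝ,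
      convPow F (n + 1) (Set.Ioi u) = ∫⁻ x, convPow F n (Set.Ioi (u - x)) ∂F := by
    intro n u
    rw [show convPow F (n + 1) = (convPow F n).conv F from rfl,
      Measure.conv_comm, conv_apply_Ioi]
  -- the key recursion
  have hrec : ∀ n : ℕ, α (n + 1) ≤ 1 + α n * (α 2 - 1) := by
    intro n
    rw [hα (n + 1)]
    refine iSup_le fun u => ?_
    obtain ⟨u, hu⟩ := u
    rw [ENNReal.div_le_iff (hpos u hu) (measure_ne_top F _)]
    set f := F (Set.Ioi u) with hf
    have hmono : Monotone fun x : ℝ => F (Set.Ioi (u - x)) := by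
      intro x y hxy
      exact measure_mono (Set.Ioi_subset_Ioi (by linarith))
    -- the integral I over Iic u of F(Ioi (u-x))
    set I := ∫⁻ x in Set.Iic u, F (Set.Ioi (u - x)) ∂F with hI
    have htail : ∫⁻ x in Set.Ioi u, F (Set.Ioi (u - x)) ∂F = f := by
      rw [setLIntegral_congr_fun measurableSet_Ioi
        (fun x (hx : x ∈ Set.Ioi u) => hF1 (u - x) (by simp at hx; linarith)),
        setLIntegral_one]
    have hsplit : I + f = convPow F 2 (Set.Ioi u) := by
      rw [show (2 : ℕ) = 1 + 1 from rfl, hconvPow 1, convPow_one,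
        ← lintegral_add_compl (fun x => F (Set.Ioi (u - x))) (measurableSet_Iic (a := u)),
        Set.compl_Iic, htail]
    have hIle : I ≤ (α 2 - 1) * f := by
      have h2 : I + f ≤ α 2 * f := by
        rw [hsplit]; exact hαle 2 u hu
      calc I ≤ α 2 * f - f :=
            (ENNReal.cancel_of_ne (measure_ne_top F _)).le_tsub_of_add_le_right h2
        _ = (α 2 - 1) * f := by
          rw [ENNReal.sub_mul (fun _ _ => measure_ne_top F _), one_mul]
    -- bound the main integral
    calc convPow F (n + 1) (Set.Ioi u)
        = ∫⁻ x, convPow F n (Set.Ioi (u - x)) ∂F := hconvPow n u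
      _ = (∫⁻ x in Set.Iic u, convPow F n (Set.Ioi (u - x)) ∂F)
          + ∫⁻ x in Set.Ioi u, convPow F n (Set.Ioi (u - x)) ∂F := by
          rw [← lintegral_add_compl (fun x => convPow F n (Set.Ioi (u - x)))
            (measurableSet_Iic (a := u)), Set.compl_Iic]
      _ ≤ α n * (α 2 - 1) * f + f := by
          gcongr
          · calc ∫⁻ x in Set.Iic u, convPow F n (Set.Ioi (u - x)) ∂F
                ≤ ∫⁻ x in Set.Iic u, α n * F (Set.Ioi (u - x)) ∂F := by
                  refine setLIntegral_mono (hmono.measurable.const_mul _) ?_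
                  intro x hx
                  exact hαle n (u - x) (by simpa using hx)
              _ = α n * I := by
                  rw [hI, lintegral_const_mul _ hmono.measurable]
              _ ≤ α n * ((α 2 - 1) * f) := by gcongr
              _ = α n * (α 2 - 1) * f := by ring
          · calc ∫⁻ x in Set.Ioi u, convPow F n (Set.Ioi (u - x)) ∂F
                ≤ ∫⁻ _ in Set.Ioi u, 1 ∂F := lintegral_mono fun x => prob_le_one
              _ = f := setLIntegral_one _
      _ = (1 + α n * (α 2 - 1)) * f := by rw [add_mul, one_mul, add_comm]
  refine ⟨fun n _ => hrec n, ?_⟩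
  -- α 1 = 1
  have hα1 : α 1 = 1 := by
    rw [hα 1]
    have : ∀ u : {u : ℝ // 0 ≤ u}, convPow F 1 (Set.Ioi u.1) / F (Set.Ioi u.1) = 1 := by
      intro u
      rw [convPow_one]
      exact ENNReal.div_self (hpos u.1 u.2) (measure_ne_top F _)
    rw [iSup_congr this]
    haveI : Nonempty {u : ℝ // 0 ≤ u} := ⟨⟨0, le_refl 0⟩⟩
    exact iSup_const
  have hpow : ∀ n : ℕ, α (n + 1) ≤ α 2 ^ (n + 1) := by
    intro n
    induction n with
    | zero => rw [hα1, pow_one]; exact h1le2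
    | succ n ih =>
        calc α (n + 2) ≤ 1 + α (n + 1) * (α 2 - 1) := hrec (n + 1)
          _ ≤ 1 + α 2 ^ (n + 1) * (α 2 - 1) := by gcongr
          _ ≤ α 2 ^ (n + 1) + α 2 ^ (n + 1) * (α 2 - 1) := by
              gcongr
              calc (1:ℝ≥0∞) = 1 ^ (n+1) := (one_pow _).symm
                _ ≤ α 2 ^ (n + 1) := by gcongr
          _ = α 2 ^ (n + 1) * (1 + (α 2 - 1)) := by ring
          _ = α 2 ^ (n + 2) := by
              rw [add_comm (1:ℝ≥0∞), tsub_add_cancel_of_le h1le2, ← pow_succ]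
  intro n hn
  obtain ⟨m, rfl⟩ := Nat.exists_eq_add_of_le hn
  rw [add_comm]
  exact hpow m
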